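/- Every infinite LSP word over a finite alphabet A is S_bLSP(A)-adic: there exist a sequence (f_n)_{n≥1} of bLSP morphisms of A* and a sequence of infinite words (w_n)_{n≥1} over A with w_1 = w and w_n = f_n(w_{n+1}) for all n ≥ 1. -/
import Mathlib


/-- `u` is a prefix of the infinite word `w`. -/
def PrefI {A : Type*} (u : List A) (w : ℕ → A) : Prop :=
  ∀ i (h : i < u.length), u[i] = w i

/-- `u` is a factor of the infinite word `w`. -/
def FactorI {A : Type*} (w : ℕ → A) (u : List A) : Prop :=
  ∃ k, ∀ i (h : i < u.length), u[i] = w (k + i)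

/-- The infinite word `w` is LSP: every left special factor of `w` is a prefix of `w`. -/
def LSPInf {A : Type*} (w : ℕ → A) : Prop :=
  ∀ (u : List A) (a b : A), a ≠ b → FactorI w (a :: u) → FactorI w (b :: u) → PrefI u w

/-- `f` is a bLSP morphism (given by its action on letters). -/
def IsBLSP {A : Type*} (f : A → List A) : Prop :=
  ∃ α, f α = [α] ∧ ∀ β, β ≠ α → ∃ γ, f β = f γ ++ [β]

/-- `v` is the image of the infinite word `w` under the non-erasing morphism `f`,
i.e. every finite concatenation `f (w 0) ++ ⋯ ++ f (w (n-1))` is a prefix of `v`. -/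
def IsImage {A B : Type*} (f : A → List B) (w : ℕ → A) (v : ℕ → B) : Prop :=
  ∀ n, PrefI (((List.range n).map w).flatMap f) v

namespace LSPAux
open Classical
variable {A : Type*} (w : ℕ → A)

lemma pred_unique (hw : LSPInf w) {i j : ℕ} (h : w (i+1) = w (j+1)) (hne : w (i+1) ≠ w 0) :
    w i = w j := by
  by_contra hij
  have h1 : FactorI w (w i :: [w (i+1)]) := by
    refine ⟨i, fun t ht => ?_⟩
    have ht2 : t < 2 := by simpa using ht
    interval_cases t <;> simp
  have h2 : FactorI w (w j :: [w (i+1)]) := by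
    refine ⟨j, fun t ht => ?_⟩
    have ht2 : t < 2 := by simpa using ht
    interval_cases t <;> simp [h]
  have := hw [w (i+1)] (w i) (w j) hij h1 h2 0 (by simp)
  simp at this
  exact hne this

noncomputable def lam (β : A) : A :=
  if h : ∃ i, w (i+1) = β ∧ β ≠ w 0 then w h.choose else w 0

lemma lam_spec (hw : LSPInf w) (i : ℕ) (hne : w (i+1) ≠ w 0) : lam w (w (i+1)) = w i := by
  have h : ∃ j, w (j+1) = w (i+1) ∧ w (i+1) ≠ w 0 := ⟨i, rfl, hne⟩
  rw [lam, dif_pos h]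
  exact pred_unique w hw (h.choose_spec.1) (by rw [h.choose_spec.1]; exact hne)

lemma lam_w0 : lam w (w 0) = w 0 := by
  rw [lam, dif_neg]
  rintro ⟨i, -, hne⟩; exact hne rfl

lemma exists_rank (hw : LSPInf w) (β : A) : ∃ m, (lam w)^[m] β = w 0 := by
  have key : ∀ i, ∃ m, (lam w)^[m] (w i) = w 0 := by
    intro i
    induction i with
    | zero => exact ⟨0, rfl⟩
    | succ i ih =>
      by_cases h : w (i+1) = w 0
      · exact ⟨0, h⟩
      · obtain ⟨m, hm⟩ := ih
        exact ⟨m+1, by rw [Function.iterate_succ_apply, lam_spec w hw i h]; exact hm⟩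
  by_cases h : ∃ i, w (i+1) = β ∧ β ≠ w 0
  · obtain ⟨i, hi, -⟩ := h
    exact hi ▸ key (i+1)
  · by_cases hβ : β = w 0
    · exact ⟨0, hβ⟩
    · exact ⟨1, by rw [Function.iterate_one, lam, dif_neg h]⟩

noncomputable def rank (β : A) : ℕ :=
  if h : ∃ m, (lam w)^[m] β = w 0 then @Nat.find _ (Classical.decPred _) h else 0

lemma rank_spec (hw : LSPInf w) (β : A) : (lam w)^[rank w β] β = w 0 := by
  rw [rank, dif_pos (exists_rank w hw β)]
  exact Nat.find_spec (exists_rank w hw β)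

lemma rank_min (hw : LSPInf w) (β : A) {j : ℕ} (hj : j < rank w β) : (lam w)^[j] β ≠ w 0 := by
  rw [rank, dif_pos (exists_rank w hw β)] at hj
  exact Nat.find_min (exists_rank w hw β) hj

lemma rank_le_of (hw : LSPInf w) (β : A) {m : ℕ} (hm : (lam w)^[m] β = w 0) : rank w β ≤ m := by
  by_contra h
  exact rank_min w hw β (not_le.mp h) hm

lemma rank_w0 (hw : LSPInf w) : rank w (w 0) = 0 :=
  Nat.le_zero.mp (rank_le_of w hw (w 0) (m := 0) rfl)

lemma rank_pos (hw : LSPInf w) {β : A} (hβ : β ≠ w 0) : 0 < rank w β := by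
  rcases Nat.eq_zero_or_pos (rank w β) with h | h
  · have hs := rank_spec w hw β
    rw [h, Function.iterate_zero_apply] at hs
    exact absurd hs hβ
  · exact h

lemma rank_lam (hw : LSPInf w) {β : A} (hβ : β ≠ w 0) : rank w β = rank w (lam w β) + 1 := by
  have h1 : 0 < rank w β := rank_pos w hw hβ
  have h2 : (lam w)^[rank w β - 1] (lam w β) = w 0 := by
    rw [← Function.iterate_succ_apply, Nat.succ_eq_add_one, Nat.sub_add_cancel h1]
    exact rank_spec w hw β
  have h3 : rank w (lam w β) ≤ rank w β - 1 := rank_le_of w hw _ h2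
  have h4 : (lam w)^[rank w (lam w β) + 1] β = w 0 := by
    rw [Function.iterate_succ_apply]
    exact rank_spec w hw (lam w β)
  have h5 : rank w β ≤ rank w (lam w β) + 1 := rank_le_of w hw _ h4
  omega

noncomputable def fmor (β : A) : List A :=
  (List.range (rank w β + 1)).map (fun j => (lam w)^[rank w β - j] β)

lemma fmor_length (β : A) : (fmor w β).length = rank w β + 1 := by
  simp [fmor]

lemma fmor_get (β : A) (j : ℕ) (h : j < rank w β + 1) :
    (fmor w β)[j]'(by rw [fmor_length]; exact h) = (lam w)^[rank w β - j] β := by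
  simp [fmor]

lemma fmor_w0 (hw : LSPInf w) : fmor w (w 0) = [w 0] := by
  rw [fmor, rank_w0 w hw]
  simp

lemma fmor_eq (hw : LSPInf w) {β : A} (hβ : β ≠ w 0) :
    fmor w β = fmor w (lam w β) ++ [β] := by
  have hr := rank_lam w hw hβ
  set r := rank w (lam w β) with hrdef
  rw [fmor, fmor, hr, ← hrdef]
  rw [List.range_succ, List.map_append]
  congr 1
  · apply List.map_congr_left
    intro j hj
    rw [List.mem_range] at hj
    have : r + 1 - j = (r - j) + 1 := by omega
    rw [this, Function.iterate_succ_apply]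
  · simp

lemma isBLSP_fmor (hw : LSPInf w) : IsBLSP (fmor w) :=
  ⟨w 0, fmor_w0 w hw, fun β hβ => ⟨lam w β, fmor_eq w hw hβ⟩⟩

lemma fmor_head (hw : LSPInf w) (β : A) :
    (fmor w β)[0]'(by rw [fmor_length]; omega) = w 0 := by
  rw [fmor_get w β 0 (by omega), Nat.sub_zero]
  exact rank_spec w hw β

lemma fmor_last (β : A) :
    (fmor w β)[rank w β]'(by rw [fmor_length]; omega) = β := by
  rw [fmor_get w β _ (by omega), Nat.sub_self, Function.iterate_zero_apply]

lemma fmor_mid (hw : LSPInf w) (β : A) {j : ℕ} (h0 : 0 < j) (h : j < rank w β + 1) :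
    (fmor w β)[j]'(by rw [fmor_length]; exact h) ≠ w 0 := by
  rw [fmor_get w β j h]
  exact rank_min w hw β (by omega)

lemma chain (hw : LSPInf w) (i : ℕ) : ∀ j, j ≤ i → (∀ t, t < j → w (i - t) ≠ w 0) →
    (lam w)^[j] (w i) = w (i - j) := by
  intro j
  induction j with
  | zero => simp
  | succ j ih =>
    intro hji hno
    rw [Function.iterate_succ_apply', ih (by omega) (fun t ht => hno t (by omega))]
    have he : i - j = (i - (j+1)) + 1 := by omega
    rw [he, lam_spec w hw _ (by rw [← he]; exact hno j (by omega))]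

lemma alpha_at (hw : LSPInf w) (i : ℕ) :
    rank w (w i) ≤ i ∧ w (i - rank w (w i)) = w 0 := by
  classical
  have hex : ∃ k, k ≤ i ∧ w (i - k) = w 0 := ⟨i, le_refl i, by simp⟩
  have hspec := Nat.find_spec hex
  have hno : ∀ t, t < Nat.find hex → w (i - t) ≠ w 0 := by
    intro t ht hcon
    exact Nat.find_min hex ht ⟨by omega, hcon⟩
  have hch := chain w hw i (Nat.find hex) hspec.1 hno
  have hrle : rank w (w i) ≤ Nat.find hex := rank_le_of w hw _ (by rw [hch]; exact hspec.2)
  refine ⟨le_trans hrle hspec.1, ?_⟩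
  have hch2 := chain w hw i (rank w (w i)) (le_trans hrle hspec.1)
    (fun t ht => hno t (by omega))
  rw [← hch2]
  exact rank_spec w hw (w i)

lemma alpha_inf [Fintype A] (hw : LSPInf w) (N : ℕ) : ∃ i, N ≤ i ∧ w i = w 0 := by
  classical
  obtain ⟨R, hR⟩ : ∃ R, ∀ β, rank w β ≤ R :=
    ⟨Finset.univ.sup (rank w), fun β => Finset.le_sup (Finset.mem_univ β)⟩
  obtain ⟨hle, hα⟩ := alpha_at w hw (N + R)
  exact ⟨N + R - rank w (w (N + R)), by have := hR (w (N + R)); omega, hα⟩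

noncomputable def pos [Fintype A] : ℕ → ℕ
  | 0 => 0
  | k+1 =>
    if h : ∃ i, pos k < i ∧ w i = w 0 then @Nat.find _ (Classical.decPred _) h else 0

variable [Fintype A]

lemma pos_exists (hw : LSPInf w) (k : ℕ) : ∃ i, pos w k < i ∧ w i = w 0 := by
  obtain ⟨i, hi, hα⟩ := alpha_inf w hw (pos w k + 1)
  exact ⟨i, by omega, hα⟩

lemma pos_succ_spec (hw : LSPInf w) (k : ℕ) :
    pos w k < pos w (k+1) ∧ w (pos w (k+1)) = w 0 := by
  rw [pos, dif_pos (pos_exists w hw k)]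
  exact @Nat.find_spec _ (Classical.decPred _) (pos_exists w hw k)

lemma pos_between (hw : LSPInf w) (k : ℕ) {i : ℕ} (h1 : pos w k < i) (h2 : i < pos w (k+1)) :
    w i ≠ w 0 := by
  rw [pos, dif_pos (pos_exists w hw k)] at h2
  intro hcon
  exact @Nat.find_min _ (Classical.decPred _) (pos_exists w hw k) _ h2 ⟨h1, hcon⟩

lemma w_pos (hw : LSPInf w) (k : ℕ) : w (pos w k) = w 0 := by
  cases k with
  | zero => rfl
  | succ k => exact (pos_succ_spec w hw k).2

lemma pos_next_unique (hw : LSPInf w) (k q : ℕ) (h1 : pos w k < q) (h2 : w q = w 0)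
    (h3 : ∀ i, pos w k < i → i < q → w i ≠ w 0) : pos w (k+1) = q := by
  rcases lt_trichotomy (pos w (k+1)) q with h | h | h
  · exact absurd (w_pos w hw (k+1)) (h3 _ (pos_succ_spec w hw k).1 h)
  · exact h
  · exact absurd h2 (pos_between w hw k h1 h)

lemma pos_mono (hw : LSPInf w) : StrictMono (pos w) :=
  strictMono_nat_of_lt_succ (fun k => (pos_succ_spec w hw k).1)

/-- the i-th letter of the desubstituted word -/
noncomputable def Wnext (k : ℕ) : A := w (pos w (k+1) - 1)

lemma block (hw : LSPInf w) (k : ℕ) :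
    fmor w (Wnext w k) =
      (List.range (pos w (k+1) - pos w k)).map (fun j => w (pos w k + j)) := by
  rw [Wnext]
  set a := pos w k
  set b := pos w (k+1) with hb
  have hab : a < b := (pos_succ_spec w hw k).1
  set L := b - a with hL
  set β := w (b - 1) with hβ
  have hno : ∀ t, t < L - 1 → w (b - 1 - t) ≠ w 0 := by
    intro t ht
    exact pos_between w hw k (by omega) (by omega)
  have hch : ∀ j, j ≤ L - 1 → (lam w)^[j] β = w (b - 1 - j) := by
    intro j hj
    exact chain w hw (b-1) j (by omega) (fun t ht => hno t (by omega))
  have hrank : rank w β = L - 1 := by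
    have h1 : rank w β ≤ L - 1 := by
      apply rank_le_of w hw
      rw [hch (L-1) (le_refl _)]
      have : b - 1 - (L - 1) = a := by omega
      rw [this]
      exact w_pos w hw k
    rcases Nat.lt_or_ge (rank w β) (L - 1) with h | h
    · exfalso
      have := rank_spec w hw β
      rw [hch (rank w β) (by omega)] at this
      exact hno (rank w β) h this
    · omega
  apply List.ext_getElem
  · simp [fmor_length, hrank]; omega
  · intro j hj1 hj2
    rw [fmor_length, hrank] at hj1
    rw [fmor_get w β j (by omega)]
    simp only [List.getElem_map, List.getElem_range]
    rw [hrank, hch (L - 1 - j) (by omega)]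
    congr 1
    omega

lemma blocks_concat (hw : LSPInf w) (k m : ℕ) :
    ((List.range m).map (fun i => Wnext w (k + i))).flatMap (fmor w) =
      (List.range (pos w (k+m) - pos w k)).map (fun j => w (pos w k + j)) := by
  induction m with
  | zero => simp
  | succ m ih =>
    rw [List.range_succ, List.map_append, List.flatMap_append, ih]
    simp only [List.map_cons, List.map_nil, List.flatMap_cons, List.flatMap_nil,
      List.append_nil]
    rw [block w hw (k+m)]
    have h1 : pos w k ≤ pos w (k+m) := (pos_mono w hw).le_iff_le.mpr (by omega)
    have h2 : pos w (k+m) ≤ pos w (k+m+1) := (pos_mono w hw).le_iff_le.mpr (by omega)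
    have he : pos w (k+(m+1)) - pos w k
        = (pos w (k+m) - pos w k) + (pos w (k+m+1) - pos w (k+m)) := by
      have : k + (m+1) = k + m + 1 := by omega
      rw [this]; omega
    rw [he, List.range_add, List.map_append, List.map_map]
    congr 1
    apply List.map_congr_left
    intro j hj
    simp only [Function.comp_apply]
    congr 1
    omega

lemma isImage_fmor (hw : LSPInf w) : IsImage (fmor w) (Wnext w) w := by
  intro n
  have hbc := blocks_concat w hw 0 n
  simp only [Nat.zero_add] at hbc
  have h0 : pos w 0 = 0 := rfl
  rw [h0] at hbc
  show PrefI (((List.range n).map (Wnext w)).flatMap (fmor w)) w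
  rw [show (List.range n).map (Wnext w) = (List.range n).map (fun i => Wnext w i) from rfl,
    hbc]
  intro i hi
  simp

lemma desub_coherent (hw : LSPInf w) (u : List A) (k : ℕ)
    (hk : ∀ i (h : i < u.length), u[i] = Wnext w (k + 1 + i)) :
    u.flatMap (fmor w) =
      (List.range (pos w (k + 1 + u.length) - pos w (k+1))).map
        (fun j => w (pos w (k+1) + j)) := by
  have hu : u = (List.range u.length).map (fun i => Wnext w (k + 1 + i)) := by
    apply List.ext_getElem (by simp)
    intro i h1 h2
    simp only [List.getElem_map, List.getElem_range]
    exact hk i h1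
  conv_lhs => rw [hu]
  exact blocks_concat w hw (k+1) u.length

lemma factor_lift (hw : LSPInf w) (u : List A) (c : A) (k : ℕ)
    (hk : ∀ i (h : i < (c :: u).length), (c :: u)[i] = Wnext w (k + i)) :
    FactorI w (c :: (u.flatMap (fmor w) ++ [w 0])) := by
  have hk' : ∀ i (h : i < u.length), u[i] = Wnext w (k + 1 + i) := by
    intro i h
    have := hk (i+1) (by simpa using Nat.succ_lt_succ h)
    rw [List.getElem_cons_succ] at this
    rw [this]
    congr 1
    omega
  have hfk := desub_coherent w hw u k hk'
  have hD : (u.flatMap (fmor w)).length = pos w (k + 1 + u.length) - pos w (k+1) := by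
    rw [hfk]; simp
  have hmono : pos w (k+1) ≤ pos w (k + 1 + u.length) := (pos_mono w hw).monotone (by omega)
  have hpos1 : 1 ≤ pos w (k+1) := by
    have := (pos_succ_spec w hw k).1; omega
  refine ⟨pos w (k+1) - 1, ?_⟩
  intro i hi
  match i with
  | 0 =>
    have := hk 0 (by simp)
    rw [List.getElem_cons_zero] at this ⊢
    rw [this, Nat.add_zero, Wnext]
    simp
  | j+1 =>
    rw [List.getElem_cons_succ]
    have hj : j < (u.flatMap (fmor w)).length + 1 := by
      simp only [List.length_cons, List.length_append, List.length_nil] at hi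
      omega
    have harith : pos w (k+1) - 1 + (j+1) = pos w (k+1) + j := by omega
    rw [harith]
    rcases Nat.lt_or_ge j (u.flatMap (fmor w)).length with hlt | hge
    · rw [List.getElem_append_left hlt, List.getElem_of_eq hfk hlt]
      simp
    · have hje : j = (u.flatMap (fmor w)).length := by omega
      subst hje
      rw [List.getElem_append_right (le_refl _)]
      simp only [Nat.sub_self, List.getElem_singleton]
      have : pos w (k+1) + (u.flatMap (fmor w)).length = pos w (k + 1 + u.length) := by
        rw [hD]; omega
      rw [this, w_pos w hw]

noncomputable def Qlen (u : List A) (i : ℕ) : ℕ := ((u.take i).flatMap (fmor w)).length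

lemma lsp_Wnext (hw : LSPInf w) : LSPInf (Wnext w) := by
  intro u a b hab ha hb
  obtain ⟨k, hk⟩ := ha
  obtain ⟨l, hl⟩ := hb
  have hpref : PrefI (u.flatMap (fmor w) ++ [w 0]) w :=
    hw _ a b hab (factor_lift w hw u a k hk) (factor_lift w hw u b l hl)
  have hG0 : ∀ j (h : j < (u.flatMap (fmor w)).length), (u.flatMap (fmor w))[j] = w j := by
    intro j h
    have := hpref j (by simp only [List.length_append, List.length_cons, List.length_nil]; omega)
    rwa [List.getElem_append_left h] at this
  have hGD : w ((u.flatMap (fmor w)).length) = w 0 := by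
    have := hpref ((u.flatMap (fmor w)).length) (by simp)
    rw [List.getElem_append_right (le_refl _)] at this
    simpa using this.symm
  have hQ0 : Qlen w u 0 = 0 := by simp [Qlen]
  have hQm : Qlen w u u.length = (u.flatMap (fmor w)).length := by
    simp [Qlen, List.take_length]
  have htake : ∀ i (hi : i < u.length), u.take (i+1) = u.take i ++ [u[i]'hi] := by
    intro i hi
    rw [List.take_succ]
    congr 1
    rw [List.getElem?_eq_getElem hi]
    rfl
  have hQsucc : ∀ i (hi : i < u.length),
      Qlen w u (i+1) = Qlen w u i + (fmor w (u[i]'hi)).length := by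
    intro i hi
    unfold Qlen
    rw [htake i hi, List.flatMap_append]
    simp
  have hsplit : ∀ i (hi : i < u.length), u.flatMap (fmor w) =
      (u.take i).flatMap (fmor w) ++ (fmor w (u[i]'hi) ++ (u.drop (i+1)).flatMap (fmor w)) := by
    intro i hi
    conv_lhs => rw [← List.take_append_drop i u, List.flatMap_append,
      List.drop_eq_getElem_cons hi, List.flatMap_cons]
  have hw_at : ∀ (i : ℕ) (hi : i < u.length) (t : ℕ) (ht : t < (fmor w (u[i]'hi)).length),
      w (Qlen w u i + t) = (fmor w (u[i]'hi))[t] := by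
    intro i hi t ht
    have hs := hsplit i hi
    have hlenD : Qlen w u i + t < (u.flatMap (fmor w)).length := by
      have := congrArg List.length hs
      simp only [List.length_append] at this
      simp only [Qlen]
      omega
    rw [← hG0 (Qlen w u i + t) hlenD, List.getElem_of_eq hs hlenD,
      List.getElem_append_right (by simp only [Qlen]; omega)]
    have hidx : Qlen w u i + t - ((u.take i).flatMap (fmor w)).length = t := by
      simp only [Qlen]; omega
    rw [List.getElem_append_left (by rw [hidx]; exact ht)]
    congr 1
  have hQα : ∀ i, i ≤ u.length → w (Qlen w u i) = w 0 := by
    intro i hi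
    rcases Nat.lt_or_ge i u.length with h | h
    · have := hw_at i h 0 (by rw [fmor_length]; omega)
      rw [Nat.add_zero] at this
      rw [this]
      exact fmor_head w hw _
    · have hii : i = u.length := by omega
      subst hii
      rw [hQm]
      exact hGD
  have hQmid : ∀ (i : ℕ) (hi : i < u.length) (t : ℕ), 0 < t → t < (fmor w (u[i]'hi)).length →
      w (Qlen w u i + t) ≠ w 0 := by
    intro i hi t ht0 htl
    rw [hw_at i hi t htl]
    exact fmor_mid w hw _ ht0 (by rw [← fmor_length w]; exact htl)
  have hposQ : ∀ i, i ≤ u.length → pos w i = Qlen w u i := by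
    intro i
    induction i with
    | zero => intro _; rw [hQ0]; rfl
    | succ i ih =>
      intro him
      have hi : i < u.length := by omega
      have hQi := ih (by omega)
      have hlen1 : 1 ≤ (fmor w (u[i]'hi)).length := by rw [fmor_length]; omega
      apply pos_next_unique w hw i _
      · rw [hQi]; rw [hQsucc i hi]; omega
      · exact hQα (i+1) him
      · intro q hq1 hq2
        rw [hQi] at hq1
        rw [hQsucc i hi] at hq2
        have hqe : q = Qlen w u i + (q - Qlen w u i) := by omega
        rw [hqe]
        exact hQmid i hi _ (by omega) (by omega)
  intro i hi
  have hlen1 : 1 ≤ (fmor w (u[i]'hi)).length := by rw [fmor_length]; omega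
  show u[i] = Wnext w i
  rw [Wnext, hposQ (i+1) (by omega)]
  have he : Qlen w u (i+1) - 1 = Qlen w u i + ((fmor w (u[i]'hi)).length - 1) := by
    rw [hQsucc i hi]; omega
  rw [he, hw_at i hi _ (by omega)]
  simp only [fmor_length, Nat.add_sub_cancel]
  exact (fmor_last w _).symm

end LSPAux

theorem lsp_is_bLSP_adic {A : Type*} [Fintype A] (w : ℕ → A) (hw : LSPInf w) :
    ∃ (f : ℕ → A → List A) (W : ℕ → ℕ → A),
      (∀ n, IsBLSP (f n)) ∧ W 0 = w ∧ ∀ n, IsImage (f n) (W (n + 1)) (W n) := by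
  classical
  let next : {v : ℕ → A // LSPInf v} → {v : ℕ → A // LSPInf v} :=
    fun x => ⟨LSPAux.Wnext x.1, LSPAux.lsp_Wnext x.1 x.2⟩
  let seq : ℕ → {v : ℕ → A // LSPInf v} := fun n => next^[n] ⟨w, hw⟩
  refine ⟨fun n => LSPAux.fmor (seq n).1, fun n => (seq n).1, ?_, rfl, ?_⟩
  · intro n
    exact LSPAux.isBLSP_fmor _ (seq n).2
  · intro n
    have hs : seq (n+1) = next (seq n) := Function.iterate_succ_apply' next n _
    show IsImage (LSPAux.fmor (seq n).1) (seq (n+1)).1 (seq n).1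
    rw [hs]
    exact LSPAux.isImage_fmor _ (seq n).2
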